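/- arXiv:2103.03801 — 3 statements merged into one kernel-verified Lean document; each statement's English description precedes it below -/
import Mathlib

section
/- Let Φ be an n×d matrix, y = Φx* with s* = supp(x*). Let s be an index set of size k with e = |s* \ s|, let l be an index set of size ℓ disjoint from s, p = s ∪ l, and suppose δ_k < 1. Then ‖Φ_lᵀ y^{⊥s}‖₂ ≤ (1 + δ_e + δ_{ℓ+e} + δ_{e+k}δ_{k+ℓ}/(1 − δ_k)) ‖x*_{l ∩ s*}‖₂ + (δ_e + δ_{ℓ+e} + δ_{e+k}δ_{k+ℓ}/(1 − δ_k)) ‖x*_{s* \ p}‖₂. -/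
open Matrix Finset

noncomputable section

/-- Number of nonzero entries of a vector. -/
def sparsity {d : ℕ} (x : Fin d → ℝ) : ℕ :=
  (Finset.univ.filter fun i => x i ≠ 0).card

/-- Squared Euclidean norm. -/
def nsq {k : Type*} [Fintype k] (v : k → ℝ) : ℝ := ∑ i, v i ^ 2

/-- Euclidean (ℓ₂) norm. -/
def l2 {k : Type*} [Fintype k] (v : k → ℝ) : ℝ := Real.sqrt (nsq v)

/-- `Φ` satisfies the order-`t` restricted isometry property with constant `δ`. -/
def satRIP {n d : ℕ} (Φ : Matrix (Fin n) (Fin d) ℝ) (t : ℕ) (δ : ℝ) : Prop :=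
  ∀ x : Fin d → ℝ, sparsity x ≤ t →
    (1 - δ) * nsq x ≤ nsq (Φ.mulVec x) ∧ nsq (Φ.mulVec x) ≤ (1 + δ) * nsq x

/-- The order-`t` RIP constant of `Φ` : the smallest `δ ≥ 0` satisfying the RIP bounds. -/
def ripConst {n d : ℕ} (Φ : Matrix (Fin n) (Fin d) ℝ) (t : ℕ) : ℝ :=
  sInf {δ : ℝ | 0 ≤ δ ∧ satRIP Φ t δ}

/-- The submatrix of `Φ` consisting of the columns indexed by `s`. -/
def cols {n d : ℕ} (Φ : Matrix (Fin n) (Fin d) ℝ) (s : Finset (Fin d)) :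
    Matrix (Fin n) {i // i ∈ s} ℝ := Φ.submatrix id (fun i => (i : Fin d))

/-- Orthogonal projection `P{Φ_s} = Φ_s (Φ_sᵀ Φ_s)⁻¹ Φ_sᵀ` onto the column span of `Φ_s`. -/
def proj {n d : ℕ} (Φ : Matrix (Fin n) (Fin d) ℝ) (s : Finset (Fin d)) :
    Matrix (Fin n) (Fin n) ℝ :=
  cols Φ s * ((cols Φ s)ᵀ * cols Φ s)⁻¹ * (cols Φ s)ᵀ

/-- Least-squares residual `v^{⊥s} = (I - P{Φ_s}) v`. -/
def residVec {n d : ℕ} (Φ : Matrix (Fin n) (Fin d) ℝ) (s : Finset (Fin d)) (y : Fin n → ℝ) :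
    Fin n → ℝ := y - (proj Φ s).mulVec y

/-- The `i`-th column of `Φ`. -/
def col {n d : ℕ} (Φ : Matrix (Fin n) (Fin d) ℝ) (i : Fin d) : Fin n → ℝ := fun k => Φ k i

/-- `x` is a least-squares estimate of `y` supported on `s`:
it is supported on `s` and minimizes `‖y - Φ z‖₂` over all `z` supported on `s`. -/
def leastSq {n d : ℕ} (Φ : Matrix (Fin n) (Fin d) ℝ) (y : Fin n → ℝ) (s : Finset (Fin d))
    (x : Fin d → ℝ) : Prop :=
  (∀ i, i ∉ s → x i = 0) ∧
  ∀ z : Fin d → ℝ, (∀ i, i ∉ s → z i = 0) → nsq (y - Φ.mulVec x) ≤ nsq (y - Φ.mulVec z)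

/-- The support of a vector, as a `Finset`. -/
def spt {d : ℕ} (x : Fin d → ℝ) : Finset (Fin d) :=
  Finset.univ.filter fun i => x i ≠ 0

namespace S11
variable {n d : ℕ} {κ : Type*} [Fintype κ]

lemma nsq_nonneg (v : κ → ℝ) : 0 ≤ nsq v := Finset.sum_nonneg fun i _ => sq_nonneg _
lemma l2_nonneg (v : κ → ℝ) : 0 ≤ l2 v := Real.sqrt_nonneg _
lemma l2_sq (v : κ → ℝ) : l2 v ^ 2 = nsq v := Real.sq_sqrt (nsq_nonneg v)
lemma nsq_eq_zero {v : κ → ℝ} (h : nsq v = 0) : v = 0 := by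
  funext i
  have := (Finset.sum_eq_zero_iff_of_nonneg (fun i _ => sq_nonneg (v i))).1 h i (mem_univ i)
  simpa using pow_eq_zero_iff (n := 2) (by norm_num) |>.1 this
lemma dot_self_eq_nsq (v : κ → ℝ) : v ⬝ᵥ v = nsq v := by
  simp [dotProduct, nsq, sq]
lemma abs_dot_le (v w : κ → ℝ) : |v ⬝ᵥ w| ≤ l2 v * l2 w := by
  have h := Finset.sum_mul_sq_le_sq_mul_sq Finset.univ v w
  have : |v ⬝ᵥ w| = Real.sqrt ((v ⬝ᵥ w) ^ 2) := by
    rw [Real.sqrt_sq_eq_abs]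
  rw [this, l2, l2, ← Real.sqrt_mul (nsq_nonneg v)]
  exact Real.sqrt_le_sqrt (by simpa [dotProduct, nsq] using h)
lemma nsq_add (v w : κ → ℝ) : nsq (v + w) = nsq v + 2 * (v ⬝ᵥ w) + nsq w := by
  simp only [nsq, dotProduct, Pi.add_apply, add_sq]
  rw [Finset.sum_add_distrib, Finset.sum_add_distrib, Finset.mul_sum]
  ring

lemma l2_add_le (v w : κ → ℝ) : l2 (v + w) ≤ l2 v + l2 w := by
  have h2 : nsq (v + w) ≤ (l2 v + l2 w) ^ 2 := by
    have ha := abs_dot_le v w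
    have hb := le_abs_self (v ⬝ᵥ w)
    nlinarith [l2_sq v, l2_sq w, l2_nonneg v, l2_nonneg w, nsq_add v w]
  rw [l2]
  calc Real.sqrt (nsq (v + w)) ≤ Real.sqrt ((l2 v + l2 w) ^ 2) := Real.sqrt_le_sqrt h2
    _ = l2 v + l2 w := Real.sqrt_sq (add_nonneg (l2_nonneg v) (l2_nonneg w))
lemma l2_smul (c : ℝ) (v : κ → ℝ) : l2 (c • v) = |c| * l2 v := by
  have : nsq (c • v) = c ^ 2 * nsq v := by simp [nsq, Finset.mul_sum]; ring_nf
  rw [l2, this, Real.sqrt_mul (sq_nonneg c), Real.sqrt_sq_eq_abs, l2]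

variable (Φ : Matrix (Fin n) (Fin d) ℝ)

lemma ripSet_nonempty (t : ℕ) : ∃ δ : ℝ, 0 ≤ δ ∧ satRIP Φ t δ := by
  refine ⟨1 + ∑ i, ∑ j, Φ i j ^ 2, by positivity, fun x _ => ⟨?_, ?_⟩⟩
  · have hC : (0:ℝ) ≤ ∑ i, ∑ j, Φ i j ^ 2 := by positivity
    nlinarith [nsq_nonneg x, nsq_nonneg (Φ.mulVec x)]
  · have hrow : ∀ i, (Φ.mulVec x i) ^ 2 ≤ (∑ j, Φ i j ^ 2) * nsq x := by
      intro i
      simpa [Matrix.mulVec, dotProduct, nsq] using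
        Finset.sum_mul_sq_le_sq_mul_sq Finset.univ (fun j => Φ i j) x
    have h1 : nsq (Φ.mulVec x) ≤ (∑ i, ∑ j, Φ i j ^ 2) * nsq x := by
      rw [nsq, Finset.sum_mul]
      exact Finset.sum_le_sum fun i _ => hrow i
    have h2 : (∑ i, ∑ j, Φ i j ^ 2) * nsq x ≤ (1 + (1 + ∑ i, ∑ j, Φ i j ^ 2)) * nsq x := by
      apply mul_le_mul_of_nonneg_right _ (nsq_nonneg x)
      nlinarith [nsq_nonneg x]
    linarith

lemma ripConst_nonneg (t : ℕ) : 0 ≤ ripConst Φ t := by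
  obtain ⟨δ, hδ⟩ := ripSet_nonempty Φ t
  exact le_csInf ⟨δ, hδ⟩ fun b hb => hb.1

lemma satRIP_ripConst (t : ℕ) : satRIP Φ t (ripConst Φ t) := by
  have hcl : IsClosed {δ : ℝ | 0 ≤ δ ∧ satRIP Φ t δ} := by
    have heq : {δ : ℝ | 0 ≤ δ ∧ satRIP Φ t δ} =
        Set.Ici 0 ∩ ⋂ x ∈ {x : Fin d → ℝ | sparsity x ≤ t},
          ({δ : ℝ | (1 - δ) * nsq x ≤ nsq (Φ.mulVec x)} ∩
           {δ : ℝ | nsq (Φ.mulVec x) ≤ (1 + δ) * nsq x}) := by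
      ext δ
      simp only [Set.mem_setOf_eq, Set.mem_inter_iff, Set.mem_Ici, Set.mem_iInter, satRIP]
    rw [heq]
    refine IsClosed.inter isClosed_Ici (isClosed_biInter fun x _ => IsClosed.inter ?_ ?_)
    · exact isClosed_le (by continuity) continuous_const
    · exact isClosed_le continuous_const (by continuity)
  obtain ⟨δ, hδ⟩ := ripSet_nonempty Φ t
  exact (hcl.csInf_mem ⟨δ, hδ⟩ ⟨0, fun b hb => hb.1⟩).2

lemma ripConst_mono {t t' : ℕ} (h : t ≤ t') : ripConst Φ t ≤ ripConst Φ t' := by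
  obtain ⟨δ, hδ⟩ := ripSet_nonempty Φ t'
  refine csInf_le_csInf ⟨0, fun b hb => hb.1⟩ ⟨δ, hδ⟩ ?_
  rintro b ⟨hb0, hb⟩
  exact ⟨hb0, fun x hx => hb x (hx.trans h)⟩

/-- restriction of a vector to a finset of coordinates -/
def rst (a : Finset (Fin d)) (v : Fin d → ℝ) : Fin d → ℝ := fun i => if i ∈ a then v i else 0

variable {Φ}

lemma spt_rst (a : Finset (Fin d)) (v : Fin d → ℝ) : spt (rst a v) ⊆ a := by
  intro i hi
  simp only [spt, rst, Finset.mem_filter] at hi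
  by_contra h
  simp [h] at hi

lemma spt_subset_spt_rst (a : Finset (Fin d)) (v : Fin d → ℝ) : spt (rst a v) ⊆ spt v := by
  intro i hi
  simp only [spt, rst, Finset.mem_filter, Finset.mem_univ, true_and] at hi ⊢
  intro h; simp [h] at hi

lemma sparsity_le {x : Fin d → ℝ} {a : Finset (Fin d)} (h : spt x ⊆ a) :
    sparsity x ≤ a.card := Finset.card_le_card h

lemma eq_zero_of_not_mem_spt {x : Fin d → ℝ} {i : Fin d} (h : i ∉ spt x) : x i = 0 := by
  by_contra hc
  exact h (by simp [spt, hc])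

lemma nsq_rst (a : Finset (Fin d)) (v : Fin d → ℝ) : nsq (rst a v) = ∑ i ∈ a, v i ^ 2 := by
  rw [nsq, ← Finset.sum_subset (Finset.subset_univ a)
    (fun i _ hi => by simp [rst, hi])]
  exact Finset.sum_congr rfl fun i hi => by simp [rst, hi]

lemma l2_rst_le (a : Finset (Fin d)) (v : Fin d → ℝ) : l2 (rst a v) ≤ l2 v := by
  apply Real.sqrt_le_sqrt
  apply Finset.sum_le_sum
  intro i _
  simp only [rst]
  split_ifs <;> simp [sq_nonneg]

lemma rst_add_compl (a : Finset (Fin d)) (v : Fin d → ℝ) : rst a v + rst aᶜ v = v := by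
  funext i
  by_cases h : i ∈ a <;> simp [rst, h]

lemma dot_rst_self (a : Finset (Fin d)) (q : Fin d → ℝ) : rst a q ⬝ᵥ q = nsq (rst a q) := by
  rw [← dot_self_eq_nsq, dotProduct, dotProduct]
  refine Finset.sum_congr rfl fun i _ => ?_
  by_cases h : i ∈ a <;> simp [rst, h]

lemma nsq_smul (c : ℝ) (v : Fin d → ℝ) : nsq (c • v) = c ^ 2 * nsq v := by
  simp [nsq, Finset.mul_sum, mul_pow]

lemma spt_smul_subset (c : ℝ) (v : Fin d → ℝ) : spt (c • v) ⊆ spt v := by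
  intro i hi
  simp only [spt, Finset.mem_filter, Finset.mem_univ, true_and, Pi.smul_apply,
    smul_eq_mul] at hi ⊢
  intro h; apply hi; simp [h]

lemma spt_neg (v : Fin d → ℝ) : spt (-v) = spt v := by
  simp [spt]

lemma nsq_neg (v : Fin d → ℝ) : nsq (-v) = nsq v := by simp [nsq]

lemma spt_add_subset (v w : Fin d → ℝ) : spt (v + w) ⊆ spt v ∪ spt w := by
  intro i hi
  simp only [spt, Finset.mem_filter, Finset.mem_univ, true_and, Finset.mem_union,
    Pi.add_apply] at hi ⊢
  by_contra h
  push_neg at h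
  exact hi (by rw [h.1, h.2, add_zero])

lemma dot_eq_zero_of_disjoint {x y : Fin d → ℝ} (h : Disjoint (spt x) (spt y)) :
    x ⬝ᵥ y = 0 := by
  rw [dotProduct]
  refine Finset.sum_eq_zero fun i _ => ?_
  by_cases hx : x i = 0
  · simp [hx]
  · have hiy : i ∉ spt y := Finset.disjoint_left.1 h (by simp [spt, hx])
    simp [eq_zero_of_not_mem_spt hiy]

lemma bilin_half {t : ℕ} {δ : ℝ} (hR : satRIP Φ t δ) {x y : Fin d → ℝ}
    {a b : Finset (Fin d)} (hx : spt x ⊆ a) (hy : spt y ⊆ b) (hab : Disjoint a b)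
    (hcard : a.card + b.card ≤ t) :
    |Φ.mulVec x ⬝ᵥ Φ.mulVec y| ≤ δ * (nsq x + nsq y) / 2 := by
  have hdisj : Disjoint (spt x) (spt y) := (hab.mono hx hy)
  have hsum : sparsity (x + y) ≤ t := by
    refine le_trans (sparsity_le (a := a ∪ b) ?_) (le_trans (Finset.card_union_le a b) hcard)
    exact (spt_add_subset x y).trans (Finset.union_subset_union hx hy)
  have hsub : sparsity (x + -y) ≤ t := by
    refine le_trans (sparsity_le (a := a ∪ b) ?_) (le_trans (Finset.card_union_le a b) hcard)
    refine (spt_add_subset x (-y)).trans ?_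
    rw [spt_neg]
    exact Finset.union_subset_union hx hy
  have hdisj' : Disjoint (spt x) (spt (-y)) := by rw [spt_neg]; exact hdisj
  have hns : nsq (x + y) = nsq x + nsq y := by
    rw [nsq_add, dot_eq_zero_of_disjoint hdisj]; ring
  have hns' : nsq (x + -y) = nsq x + nsq y := by
    rw [nsq_add, dot_eq_zero_of_disjoint hdisj', nsq_neg]; ring
  have h1 := hR (x + y) hsum
  have h2 := hR (x + -y) hsub
  rw [hns] at h1
  rw [hns'] at h2
  have e1 : nsq (Φ.mulVec (x + y)) =
      nsq (Φ.mulVec x) + 2 * (Φ.mulVec x ⬝ᵥ Φ.mulVec y) + nsq (Φ.mulVec y) := by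
    rw [Matrix.mulVec_add, nsq_add]
  have e2 : nsq (Φ.mulVec (x + -y)) =
      nsq (Φ.mulVec x) - 2 * (Φ.mulVec x ⬝ᵥ Φ.mulVec y) + nsq (Φ.mulVec y) := by
    rw [Matrix.mulVec_add, Matrix.mulVec_neg, nsq_add]
    simp [nsq_neg]
    ring
  rw [abs_le]
  constructor <;> nlinarith [h1.1, h1.2, h2.1, h2.2]

lemma l2_pos_of_nsq_ne {v : Fin d → ℝ} (h : nsq v ≠ 0) : 0 < l2 v := by
  rw [l2]
  exact Real.sqrt_pos.2 (lt_of_le_of_ne (nsq_nonneg v) (Ne.symm h))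

lemma bilin {t : ℕ} {δ : ℝ} (hR : satRIP Φ t δ) (hδ : 0 ≤ δ) {x y : Fin d → ℝ}
    {a b : Finset (Fin d)} (hx : spt x ⊆ a) (hy : spt y ⊆ b) (hab : Disjoint a b)
    (hcard : a.card + b.card ≤ t) :
    |Φ.mulVec x ⬝ᵥ Φ.mulVec y| ≤ δ * (l2 x * l2 y) := by
  by_cases hx0 : nsq x = 0
  · rw [nsq_eq_zero hx0]
    simp only [Matrix.mulVec_zero, zero_dotProduct, abs_zero]
    exact mul_nonneg hδ (mul_nonneg (l2_nonneg _) (l2_nonneg _))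
  by_cases hy0 : nsq y = 0
  · rw [nsq_eq_zero hy0]
    simp only [Matrix.mulVec_zero, dotProduct_zero, abs_zero]
    exact mul_nonneg hδ (mul_nonneg (l2_nonneg _) (l2_nonneg _))
  have hlx : 0 < l2 x := l2_pos_of_nsq_ne hx0
  have hly : 0 < l2 y := l2_pos_of_nsq_ne hy0
  set c : ℝ := Real.sqrt (l2 y / l2 x) with hc
  have hcpos : 0 < c := Real.sqrt_pos.2 (by positivity)
  have hc2 : c ^ 2 = l2 y / l2 x := Real.sq_sqrt (by positivity)
  have key := bilin_half hR (x := c • x) (y := c⁻¹ • y)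
    ((spt_smul_subset c x).trans hx) ((spt_smul_subset c⁻¹ y).trans hy) hab hcard
  have hmv : Φ.mulVec (c • x) ⬝ᵥ Φ.mulVec (c⁻¹ • y) = Φ.mulVec x ⬝ᵥ Φ.mulVec y := by
    rw [Matrix.mulVec_smul, Matrix.mulVec_smul, smul_dotProduct, dotProduct_smul]
    rw [smul_smul, mul_inv_cancel₀ hcpos.ne', one_smul]
  rw [hmv, nsq_smul, nsq_smul] at key
  have hq : c ^ 2 * nsq x = l2 x * l2 y := by
    rw [hc2, ← l2_sq x]
    field_simp
  have hq' : c⁻¹ ^ 2 * nsq y = l2 x * l2 y := by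
    rw [inv_pow, hc2, ← l2_sq y]
    field_simp
  rw [hq, hq'] at key
  calc |Φ.mulVec x ⬝ᵥ Φ.mulVec y| ≤ δ * (l2 x * l2 y + l2 x * l2 y) / 2 := key
    _ = δ * (l2 x * l2 y) := by ring

lemma diag {t : ℕ} {δ : ℝ} (hR : satRIP Φ t δ) (hδ : 0 ≤ δ) {x y : Fin d → ℝ}
    {a : Finset (Fin d)} (hx : spt x ⊆ a) (hy : spt y ⊆ a) (hcard : a.card ≤ t) :
    |Φ.mulVec x ⬝ᵥ Φ.mulVec y| ≤ (1 + δ) * (l2 x * l2 y) := by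
  have hbx : l2 (Φ.mulVec x) ≤ Real.sqrt (1 + δ) * l2 x := by
    rw [l2, l2, ← Real.sqrt_mul (by linarith)]
    exact Real.sqrt_le_sqrt (hR x (le_trans (sparsity_le hx) hcard)).2
  have hby : l2 (Φ.mulVec y) ≤ Real.sqrt (1 + δ) * l2 y := by
    rw [l2, l2, ← Real.sqrt_mul (by linarith)]
    exact Real.sqrt_le_sqrt (hR y (le_trans (sparsity_le hy) hcard)).2
  have hs : Real.sqrt (1 + δ) * Real.sqrt (1 + δ) = 1 + δ :=
    Real.mul_self_sqrt (by linarith)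
  calc |Φ.mulVec x ⬝ᵥ Φ.mulVec y| ≤ l2 (Φ.mulVec x) * l2 (Φ.mulVec y) := abs_dot_le _ _
    _ ≤ (Real.sqrt (1 + δ) * l2 x) * (Real.sqrt (1 + δ) * l2 y) := by
        apply mul_le_mul hbx hby (l2_nonneg _)
          (mul_nonneg (Real.sqrt_nonneg _) (l2_nonneg _))
    _ = (1 + δ) * (l2 x * l2 y) := by rw [mul_mul_mul_comm, hs]

lemma rst_add (a : Finset (Fin d)) (x y : Fin d → ℝ) :
    rst a (x + y) = rst a x + rst a y := by
  funext i
  by_cases h : i ∈ a <;> simp [rst, h]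

lemma rst_sub (a : Finset (Fin d)) (x y : Fin d → ℝ) :
    rst a (x - y) = rst a x - rst a y := by
  funext i
  by_cases h : i ∈ a <;> simp [rst, h]

lemma l2_neg (v : Fin d → ℝ) : l2 (-v) = l2 v := by rw [l2, l2, nsq_neg]

lemma l2_sub_le (v w : Fin d → ℝ) : l2 (v - w) ≤ l2 v + l2 w := by
  rw [sub_eq_add_neg]
  exact (l2_add_le v (-w)).trans (by rw [l2_neg])

lemma l2_rst_le_of_forall {a : Finset (Fin d)} {q : Fin d → ℝ} {C : ℝ} (hC : 0 ≤ C)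
    (h : ∀ v : Fin d → ℝ, spt v ⊆ a → |v ⬝ᵥ q| ≤ C * l2 v) : l2 (rst a q) ≤ C := by
  have h1 : nsq (rst a q) ≤ C * l2 (rst a q) := by
    calc nsq (rst a q) = rst a q ⬝ᵥ q := (dot_rst_self a q).symm
      _ ≤ |rst a q ⬝ᵥ q| := le_abs_self _
      _ ≤ C * l2 (rst a q) := h _ (spt_rst a q)
  rw [← l2_sq] at h1
  by_contra hcon
  push_neg at hcon
  nlinarith [l2_nonneg (rst a q)]

/-- extension of a subtype-indexed vector by zero -/
def ext (s : Finset (Fin d)) (v : {i // i ∈ s} → ℝ) : Fin d → ℝ :=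
  fun i => if h : i ∈ s then v ⟨i, h⟩ else 0

lemma spt_ext (s : Finset (Fin d)) (v : {i // i ∈ s} → ℝ) : spt (ext s v) ⊆ s := by
  intro i hi
  simp only [spt, ext, Finset.mem_filter] at hi
  by_contra h
  simp [h] at hi

lemma nsq_ext (s : Finset (Fin d)) (v : {i // i ∈ s} → ℝ) : nsq (ext s v) = nsq v := by
  rw [nsq, ← Finset.sum_subset (Finset.subset_univ s) (fun i _ hi => by simp [ext, hi]),
    ← Finset.sum_coe_sort s (fun i => ext s v i ^ 2), nsq]
  exact Finset.sum_congr rfl fun j _ => by simp [ext, j.2]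

lemma nsq_coe (s : Finset (Fin d)) (q : Fin d → ℝ) :
    nsq (fun j : {i // i ∈ s} => q j) = nsq (rst s q) := by
  rw [nsq_rst, nsq, Finset.sum_coe_sort s (fun i => q i ^ 2)]

lemma ext_coe {s : Finset (Fin d)} {z : Fin d → ℝ} (hz : spt z ⊆ s) :
    ext s (fun j : {i // i ∈ s} => z j) = z := by
  funext i
  by_cases h : i ∈ s
  · simp [ext, h]
  · simp only [ext, h, dif_neg, not_false_iff]
    by_contra hc
    exact h (hz (by simp [spt, Ne.symm hc]))

lemma cols_mulVec (s : Finset (Fin d)) (v : {i // i ∈ s} → ℝ) :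
    (cols Φ s).mulVec v = Φ.mulVec (ext s v) := by
  funext i
  rw [Matrix.mulVec, Matrix.mulVec, dotProduct, dotProduct,
    ← Finset.sum_subset (Finset.subset_univ s) (fun j _ hj => by simp [ext, hj]),
    ← Finset.sum_coe_sort s (fun j => Φ i j * ext s v j)]
  refine Finset.sum_congr rfl fun j _ => ?_
  simp [cols, ext, j.2]

lemma colsT_mulVec (s : Finset (Fin d)) (y : Fin n → ℝ) (j : {i // i ∈ s}) :
    ((cols Φ s)ᵀ.mulVec y) j = (Φᵀ.mulVec y) (j : Fin d) := by
  simp [Matrix.mulVec, dotProduct, cols, Matrix.transpose]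

lemma dot_G (s : Finset (Fin d)) (v : {i // i ∈ s} → ℝ) :
    v ⬝ᵥ ((cols Φ s)ᵀ * cols Φ s).mulVec v = nsq ((cols Φ s).mulVec v) := by
  rw [← Matrix.mulVec_mulVec, Matrix.dotProduct_mulVec, Matrix.vecMul_transpose,
    dot_self_eq_nsq]

section Gram
variable {s : Finset (Fin d)} {δ : ℝ} (hR : satRIP Φ s.card δ) (hδ1 : δ < 1)
include hR hδ1

lemma G_quad_lower (v : {i // i ∈ s} → ℝ) :
    (1 - δ) * nsq v ≤ v ⬝ᵥ ((cols Φ s)ᵀ * cols Φ s).mulVec v := by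
  rw [dot_G, cols_mulVec]
  have h := (hR (ext s v) (sparsity_le (spt_ext s v))).1
  rwa [nsq_ext] at h

lemma G_isUnit_det : IsUnit ((cols Φ s)ᵀ * cols Φ s).det := by
  have hpd : Matrix.PosDef ((cols Φ s)ᵀ * cols Φ s) := by
    refine Matrix.PosDef.of_dotProduct_mulVec_pos ?_ ?_
    · ext i j
      simp [Matrix.conjTranspose_apply, Matrix.mul_apply, mul_comm]
    · intro v hv
      have h1 := G_quad_lower hR hδ1 v
      have h2 : nsq v ≠ 0 := fun hc => hv (nsq_eq_zero hc)
      have h3 : 0 < nsq v := lt_of_le_of_ne (nsq_nonneg v) (Ne.symm h2)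
      have : (0:ℝ) < (1 - δ) * nsq v := mul_pos (by linarith) h3
      simp only [star_trivial]
      linarith
  exact isUnit_iff_ne_zero.2 (ne_of_gt hpd.det_pos)

lemma G_inv_mul_cancel (v : {i // i ∈ s} → ℝ) :
    (((cols Φ s)ᵀ * cols Φ s)⁻¹ * ((cols Φ s)ᵀ * cols Φ s)).mulVec v = v := by
  rw [Matrix.nonsing_inv_mul _ (G_isUnit_det hR hδ1), Matrix.one_mulVec]

lemma G_mul_inv_cancel (v : {i // i ∈ s} → ℝ) :
    (((cols Φ s)ᵀ * cols Φ s) * ((cols Φ s)ᵀ * cols Φ s)⁻¹).mulVec v = v := by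
  rw [Matrix.mul_nonsing_inv _ (G_isUnit_det hR hδ1), Matrix.one_mulVec]

omit hR hδ1 in
lemma proj_mulVec (y : Fin n → ℝ) :
    (proj Φ s).mulVec y =
      Φ.mulVec (ext s ((((cols Φ s)ᵀ * cols Φ s)⁻¹).mulVec ((cols Φ s)ᵀ.mulVec y))) := by
  rw [proj, ← Matrix.mulVec_mulVec, ← Matrix.mulVec_mulVec, cols_mulVec]

lemma proj_fix {z : Fin d → ℝ} (hz : spt z ⊆ s) :
    (proj Φ s).mulVec (Φ.mulVec z) = Φ.mulVec z := by
  have hz' : Φ.mulVec z = (cols Φ s).mulVec (fun j : {i // i ∈ s} => z j) := by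
    rw [cols_mulVec, ext_coe hz]
  rw [proj_mulVec, hz', Matrix.mulVec_mulVec, Matrix.mulVec_mulVec,
    Matrix.mul_assoc (((cols Φ s)ᵀ * cols Φ s)⁻¹),
    G_inv_mul_cancel hR hδ1, ext_coe hz, ← hz']

lemma zeta_le (c : {i // i ∈ s} → ℝ) :
    l2 ((((cols Φ s)ᵀ * cols Φ s)⁻¹).mulVec c) ≤ l2 c / (1 - δ) := by
  set ζ := (((cols Φ s)ᵀ * cols Φ s)⁻¹).mulVec c with hζ
  have hGζ : ((cols Φ s)ᵀ * cols Φ s).mulVec ζ = c := by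
    rw [hζ, Matrix.mulVec_mulVec, G_mul_inv_cancel hR hδ1]
  have h1 : (1 - δ) * nsq ζ ≤ ζ ⬝ᵥ c := by
    rw [← hGζ]
    exact G_quad_lower hR hδ1 ζ
  have h2 : ζ ⬝ᵥ c ≤ l2 ζ * l2 c := le_trans (le_abs_self _) (abs_dot_le ζ c)
  rw [← l2_sq] at h1
  rw [le_div_iff₀ (by linarith)]
  rcases eq_or_lt_of_le (l2_nonneg ζ) with h | h
  · rw [← h, zero_mul]
    exact l2_nonneg c
  · nlinarith

end Gram
end S11

open S11

/-- upper bound on the correlation of the list features with the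
residual. -/
theorem stmt11 {n d : ℕ} (Φ : Matrix (Fin n) (Fin d) ℝ)
    (xs : Fin d → ℝ) (k ℓ e : ℕ)
    (s : Finset (Fin d)) (hs : s.card = k)
    (he : e = (spt xs \ s).card)
    (l : Finset (Fin d)) (hlc : l.card = ℓ) (hdisj : Disjoint l s)
    (hδk : ripConst Φ k < 1) :
    Real.sqrt (∑ i ∈ l, (_root_.col Φ i ⬝ᵥ residVec Φ s (Φ.mulVec xs)) ^ 2) ≤
      (1 + ripConst Φ e + ripConst Φ (ℓ + e) +
          ripConst Φ (e + k) * ripConst Φ (k + ℓ) / (1 - ripConst Φ k)) *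
        Real.sqrt (∑ i ∈ l ∩ spt xs, xs i ^ 2) +
      (ripConst Φ e + ripConst Φ (ℓ + e) +
          ripConst Φ (e + k) * ripConst Φ (k + ℓ) / (1 - ripConst Φ k)) *
        Real.sqrt (∑ i ∈ spt xs \ (s ∪ l), xs i ^ 2) := by
  classical
  -- notation
  set δk := ripConst Φ k with hδkdef
  set δe := ripConst Φ e with hδedef
  set δle := ripConst Φ (ℓ + e) with hδledef
  set δek := ripConst Φ (e + k) with hδekdef
  set δkl := ripConst Φ (k + ℓ) with hδkldef
  have hRk : satRIP Φ k δk := satRIP_ripConst Φ k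
  have hRe : satRIP Φ e δe := satRIP_ripConst Φ e
  have hRle : satRIP Φ (ℓ + e) δle := satRIP_ripConst Φ (ℓ + e)
  have hRek : satRIP Φ (e + k) δek := satRIP_ripConst Φ (e + k)
  have hRkl : satRIP Φ (k + ℓ) δkl := satRIP_ripConst Φ (k + ℓ)
  have hδk0 : (0:ℝ) ≤ δk := ripConst_nonneg Φ k
  have hδe0 : (0:ℝ) ≤ δe := ripConst_nonneg Φ e
  have hδle0 : (0:ℝ) ≤ δle := ripConst_nonneg Φ (ℓ + e)
  have hδek0 : (0:ℝ) ≤ δek := ripConst_nonneg Φ (e + k)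
  have hδkl0 : (0:ℝ) ≤ δkl := ripConst_nonneg Φ (k + ℓ)
  have h1δ : (0:ℝ) < 1 - δk := by linarith
  have hRs : satRIP Φ s.card δk := by rw [hs]; exact hRk
  set D := δek * δkl / (1 - δk) with hD
  have hD0 : 0 ≤ D := by
    rw [hD]
    exact div_nonneg (mul_nonneg hδek0 hδkl0) (le_of_lt h1δ)
  -- the three parts of xs
  set u := rst (l ∩ spt xs) xs with hu
  set w := rst (spt xs \ (s ∪ l)) xs with hw
  set z0 := rst s xs with hz0
  have hus : spt u ⊆ l ∩ spt xs := spt_rst _ _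
  have hws : spt w ⊆ spt xs \ (s ∪ l) := spt_rst _ _
  have hz0s : spt z0 ⊆ s := spt_rst _ _
  -- cardinalities
  have hcapu : l ∩ spt xs ⊆ spt xs \ s := by
    intro i hi
    rw [Finset.mem_inter] at hi
    rw [Finset.mem_sdiff]
    exact ⟨hi.2, Finset.disjoint_left.1 hdisj hi.1⟩
  have hcardu : (l ∩ spt xs).card ≤ e := he ▸ Finset.card_le_card hcapu
  have hcapw : spt xs \ (s ∪ l) ⊆ spt xs \ s := by
    intro i hi
    rw [Finset.mem_sdiff, Finset.mem_union] at hi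
    rw [Finset.mem_sdiff]
    exact ⟨hi.1, fun h => hi.2 (Or.inl h)⟩
  have hcardw : (spt xs \ (s ∪ l)).card ≤ e := he ▸ Finset.card_le_card hcapw
  -- decomposition xs = z0 + u + w
  have hdecomp : xs = z0 + u + w := by
    funext i
    simp only [Pi.add_apply, hu, hw, hz0, rst, Finset.mem_inter, Finset.mem_sdiff,
      Finset.mem_union]
    by_cases hsi : i ∈ s
    · have hil : i ∉ l := fun hl => (Finset.disjoint_left.1 hdisj hl) hsi
      simp [hsi, hil]
    · by_cases hsp : i ∈ spt xs
      · by_cases hli : i ∈ l <;> simp [hsi, hli, hsp]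
      · have hx0 : xs i = 0 := eq_zero_of_not_mem_spt hsp
        by_cases hli : i ∈ l <;> simp [hsi, hli, hsp, hx0]
  -- the residual
  set r := residVec Φ s (Φ.mulVec xs) with hr
  have hfix : (proj Φ s).mulVec (Φ.mulVec z0) = Φ.mulVec z0 := proj_fix hRs hδk hz0s
  have hrval : r = (Φ.mulVec u - (proj Φ s).mulVec (Φ.mulVec u))
      + (Φ.mulVec w - (proj Φ s).mulVec (Φ.mulVec w)) := by
    rw [hr, residVec, hdecomp, Matrix.mulVec_add, Matrix.mulVec_add,
      Matrix.mulVec_add, Matrix.mulVec_add, hfix]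
    abel
  -- rewrite LHS and RHS norms
  have hq : ∀ i, _root_.col Φ i ⬝ᵥ r = Φᵀ.mulVec r i := by
    intro i
    simp [_root_.col, Matrix.mulVec, dotProduct, Matrix.transpose_apply]
  have hLHS : Real.sqrt (∑ i ∈ l, (_root_.col Φ i ⬝ᵥ r) ^ 2) = l2 (rst l (Φᵀ.mulVec r)) := by
    rw [l2, nsq_rst]
    simp only [hq]
  have hul2 : Real.sqrt (∑ i ∈ l ∩ spt xs, xs i ^ 2) = l2 u := by rw [l2, hu, nsq_rst]
  have hwl2 : Real.sqrt (∑ i ∈ spt xs \ (s ∪ l), xs i ^ 2) = l2 w := by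
    rw [l2, hw, nsq_rst]
  -- generic bound for the projection pieces
  have projpiece : ∀ (y : Fin d → ℝ) (b : Finset (Fin d)), spt y ⊆ b → Disjoint s b →
      b.card ≤ e →
      l2 (rst l (Φᵀ.mulVec ((proj Φ s).mulVec (Φ.mulVec y)))) ≤ D * l2 y := by
    intro y b hyb hsb hbe
    set c := (cols Φ s)ᵀ.mulVec (Φ.mulVec y) with hc
    set ζ := ext s ((((cols Φ s)ᵀ * cols Φ s)⁻¹).mulVec c) with hζ
    have hPy : (proj Φ s).mulVec (Φ.mulVec y) = Φ.mulVec ζ := proj_mulVec _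
    have hζs : spt ζ ⊆ s := spt_ext _ _
    -- bound on l2 c
    have hcrst : l2 c = l2 (rst s (Φᵀ.mulVec (Φ.mulVec y))) := by
      have : c = fun j : {i // i ∈ s} => (Φᵀ.mulVec (Φ.mulVec y)) j :=
        funext fun j => colsT_mulVec s (Φ.mulVec y) j
      rw [l2, l2, this, nsq_coe]
    have hcbound : l2 c ≤ δek * l2 y := by
      rw [hcrst]
      refine l2_rst_le_of_forall (mul_nonneg hδek0 (l2_nonneg y)) fun v hv => ?_
      have hdp : v ⬝ᵥ Φᵀ.mulVec (Φ.mulVec y) = Φ.mulVec v ⬝ᵥ Φ.mulVec y := by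
        rw [Matrix.dotProduct_mulVec, Matrix.vecMul_transpose]
      rw [hdp]
      have := bilin hRek hδek0 hv hyb hsb (by omega)
      calc |Φ.mulVec v ⬝ᵥ Φ.mulVec y| ≤ δek * (l2 v * l2 y) := this
        _ = δek * l2 y * l2 v := by ring
    -- bound on l2 ζ
    have hζnorm : l2 ζ ≤ δek * l2 y / (1 - δk) := by
      have h1 : l2 ζ = l2 ((((cols Φ s)ᵀ * cols Φ s)⁻¹).mulVec c) := by
        rw [hζ, l2, l2, nsq_ext]
      rw [h1]
      refine (zeta_le hRs hδk c).trans ?_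
      exact div_le_div_of_nonneg_right hcbound h1δ.le
    -- final piece bound
    rw [hPy]
    have hC0 : 0 ≤ δkl * l2 ζ := mul_nonneg hδkl0 (l2_nonneg ζ)
    have hmain : l2 (rst l (Φᵀ.mulVec (Φ.mulVec ζ))) ≤ δkl * l2 ζ := by
      refine l2_rst_le_of_forall hC0 fun v hv => ?_
      have hdp : v ⬝ᵥ Φᵀ.mulVec (Φ.mulVec ζ) = Φ.mulVec v ⬝ᵥ Φ.mulVec ζ := by
        rw [Matrix.dotProduct_mulVec, Matrix.vecMul_transpose]
      rw [hdp]
      have := bilin hRkl hδkl0 hv hζs hdisj (by omega)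
      calc |Φ.mulVec v ⬝ᵥ Φ.mulVec ζ| ≤ δkl * (l2 v * l2 ζ) := this
        _ = δkl * l2 ζ * l2 v := by ring
    refine hmain.trans ?_
    calc δkl * l2 ζ ≤ δkl * (δek * l2 y / (1 - δk)) :=
          mul_le_mul_of_nonneg_left hζnorm hδkl0
      _ = D * l2 y := by rw [hD]; field_simp
  -- piece 1
  have piece1 : l2 (rst l (Φᵀ.mulVec (Φ.mulVec u))) ≤ (1 + δe + δle) * l2 u := by
    have hC0 : 0 ≤ (1 + δe + δle) * l2 u := by
      apply mul_nonneg (by linarith) (l2_nonneg u)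
    refine l2_rst_le_of_forall hC0 fun v hv => ?_
    have hdp : v ⬝ᵥ Φᵀ.mulVec (Φ.mulVec u) = Φ.mulVec v ⬝ᵥ Φ.mulVec u := by
      rw [Matrix.dotProduct_mulVec, Matrix.vecMul_transpose]
    rw [hdp]
    set v1 := rst (spt xs) v with hv1
    set v2 := rst (spt xs)ᶜ v with hv2
    have hvsplit : v = v1 + v2 := (rst_add_compl (spt xs) v).symm
    have hv1s : spt v1 ⊆ l ∩ spt xs :=
      Finset.subset_inter ((spt_subset_spt_rst _ _).trans hv) (spt_rst _ _)
    have hv2s : spt v2 ⊆ l \ spt xs := by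
      intro i hi
      rw [Finset.mem_sdiff]
      have h1 := (spt_subset_spt_rst _ _) hi
      have h2 := (spt_rst _ _) hi
      rw [Finset.mem_compl] at h2
      exact ⟨hv h1, h2⟩
    have hd1 : |Φ.mulVec v1 ⬝ᵥ Φ.mulVec u| ≤ (1 + δe) * (l2 v1 * l2 u) :=
      diag hRe hδe0 hv1s hus hcardu
    have hd2 : |Φ.mulVec v2 ⬝ᵥ Φ.mulVec u| ≤ δle * (l2 v2 * l2 u) := by
      refine bilin hRle hδle0 hv2s hus ?_ ?_
      · exact Finset.disjoint_left.2 fun i hi hi' => by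
          rw [Finset.mem_sdiff] at hi
          rw [Finset.mem_inter] at hi'
          exact hi.2 hi'.2
      · have : (l \ spt xs).card + (l ∩ spt xs).card = l.card := by
          rw [Finset.card_sdiff_add_card_inter]
        omega
    have habs : |Φ.mulVec v ⬝ᵥ Φ.mulVec u| ≤
        |Φ.mulVec v1 ⬝ᵥ Φ.mulVec u| + |Φ.mulVec v2 ⬝ᵥ Φ.mulVec u| := by
      rw [hvsplit, Matrix.mulVec_add, add_dotProduct]
      exact abs_add_le _ _
    have hl2v1 : l2 v1 ≤ l2 v := l2_rst_le _ _
    have hl2v2 : l2 v2 ≤ l2 v := l2_rst_le _ _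
    have hstep1 : (1 + δe) * (l2 v1 * l2 u) ≤ (1 + δe) * (l2 v * l2 u) :=
      mul_le_mul_of_nonneg_left
        (mul_le_mul_of_nonneg_right hl2v1 (l2_nonneg u)) (by linarith)
    have hstep2 : δle * (l2 v2 * l2 u) ≤ δle * (l2 v * l2 u) :=
      mul_le_mul_of_nonneg_left
        (mul_le_mul_of_nonneg_right hl2v2 (l2_nonneg u)) hδle0
    calc |Φ.mulVec v ⬝ᵥ Φ.mulVec u| ≤
        (1 + δe) * (l2 v * l2 u) + δle * (l2 v * l2 u) := by linarith
      _ = (1 + δe + δle) * l2 u * l2 v := by ring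
  -- piece 3
  have piece3 : l2 (rst l (Φᵀ.mulVec (Φ.mulVec w))) ≤ δle * l2 w := by
    have hC0 : 0 ≤ δle * l2 w := mul_nonneg hδle0 (l2_nonneg w)
    refine l2_rst_le_of_forall hC0 fun v hv => ?_
    have hdp : v ⬝ᵥ Φᵀ.mulVec (Φ.mulVec w) = Φ.mulVec v ⬝ᵥ Φ.mulVec w := by
      rw [Matrix.dotProduct_mulVec, Matrix.vecMul_transpose]
    rw [hdp]
    have hdis : Disjoint l (spt xs \ (s ∪ l)) := by
      refine Finset.disjoint_left.2 fun i hi hi' => ?_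
      rw [Finset.mem_sdiff, Finset.mem_union] at hi'
      exact hi'.2 (Or.inr hi)
    have := bilin hRle hδle0 hv hws hdis (by omega)
    calc |Φ.mulVec v ⬝ᵥ Φ.mulVec w| ≤ δle * (l2 v * l2 w) := this
      _ = δle * l2 w * l2 v := by ring
  -- pieces 2 and 4
  have hsu_dis : Disjoint s (l ∩ spt xs) :=
    Finset.disjoint_left.2 fun i hi hi' => by
      rw [Finset.mem_inter] at hi'
      exact (Finset.disjoint_left.1 hdisj hi'.1) hi
  have hsw_dis : Disjoint s (spt xs \ (s ∪ l)) :=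
    Finset.disjoint_left.2 fun i hi hi' => by
      rw [Finset.mem_sdiff, Finset.mem_union] at hi'
      exact hi'.2 (Or.inl hi)
  have piece2 := projpiece u (l ∩ spt xs) hus hsu_dis hcardu
  have piece4 := projpiece w (spt xs \ (s ∪ l)) hws hsw_dis hcardw
  -- assemble
  have hsplit : rst l (Φᵀ.mulVec r) =
      (rst l (Φᵀ.mulVec (Φ.mulVec u)) -
        rst l (Φᵀ.mulVec ((proj Φ s).mulVec (Φ.mulVec u)))) +
      (rst l (Φᵀ.mulVec (Φ.mulVec w)) -
        rst l (Φᵀ.mulVec ((proj Φ s).mulVec (Φ.mulVec w)))) := by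
    rw [hrval, Matrix.mulVec_add, Matrix.mulVec_sub, Matrix.mulVec_sub,
      rst_add, rst_sub, rst_sub]
  have htri : l2 (rst l (Φᵀ.mulVec r)) ≤
      ((1 + δe + δle) * l2 u + D * l2 u) + (δle * l2 w + D * l2 w) := by
    rw [hsplit]
    refine (l2_add_le _ _).trans ?_
    have t1 := (l2_sub_le (rst l (Φᵀ.mulVec (Φ.mulVec u)))
      (rst l (Φᵀ.mulVec ((proj Φ s).mulVec (Φ.mulVec u)))))
    have t2 := (l2_sub_le (rst l (Φᵀ.mulVec (Φ.mulVec w)))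
      (rst l (Φᵀ.mulVec ((proj Φ s).mulVec (Φ.mulVec w)))))
    linarith
  rw [hLHS, hul2, hwl2]
  have hwl2nn : 0 ≤ l2 w := l2_nonneg w
  have hextra : 0 ≤ δe * l2 w := mul_nonneg hδe0 hwl2nn
  calc l2 (rst l (Φᵀ.mulVec r)) ≤
      ((1 + δe + δle) * l2 u + D * l2 u) + (δle * l2 w + D * l2 w) := htri
    _ ≤ (1 + δe + δle + D) * l2 u + (δe + δle + D) * l2 w := by linarith
end
end

section
/- Let Φ be an n×d matrix, y = Φx* with supp(x*) = s* ⊆ p for an index set p with |p| ≤ m + ℓ and δ_{m+ℓ} < 1/2. Let x̂ be the least-squares estimate of y supported on p. Then for every i ∈ p with i ∈ s*: if x*_i ≠ 0, then x̂_i ≠ 0; specifically, |Φ_iᵀ(I − P{Φ_{p∖{i}}})Φ_i x*_i| ≥ (1 − δ_{m+ℓ}²/(1 − δ_{m+ℓ})) |x*_i| > 0. -/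
open Matrix Finset

noncomputable section

section Stmt14Aux

lemma nsq_nonneg {k : Type*} [Fintype k] (v : k → ℝ) : 0 ≤ nsq v :=
  Finset.sum_nonneg fun _ _ => sq_nonneg _

lemma nsq_eq_zero {k : Type*} [Fintype k] {v : k → ℝ} (h : nsq v = 0) : v = 0 := by
  funext j
  have h2 := (Finset.sum_eq_zero_iff_of_nonneg
    (fun i _ => sq_nonneg (v i))).1 h j (Finset.mem_univ j)
  exact sq_eq_zero_iff.1 h2

lemma dot_self_nsq {k : Type*} [Fintype k] (v : k → ℝ) : v ⬝ᵥ v = nsq v := by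
  simp [dotProduct, nsq, sq]

lemma ripSet_nonempty {n d : ℕ} (Φ : Matrix (Fin n) (Fin d) ℝ) (t : ℕ) :
    {δ : ℝ | 0 ≤ δ ∧ satRIP Φ t δ}.Nonempty := by
  have hC0 : 0 ≤ ∑ k, ∑ j, Φ k j ^ 2 :=
    Finset.sum_nonneg fun _ _ => Finset.sum_nonneg fun _ _ => sq_nonneg _
  refine ⟨1 + ∑ k, ∑ j, Φ k j ^ 2, by linarith, fun x _ => ⟨?_, ?_⟩⟩
  · have h1 := nsq_nonneg (Φ.mulVec x)
    have h2 := nsq_nonneg x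
    nlinarith
  · have key : nsq (Φ.mulVec x) ≤ (∑ k, ∑ j, Φ k j ^ 2) * nsq x := by
      have hk : ∀ k : Fin n, (Φ.mulVec x k) ^ 2 ≤ (∑ j, Φ k j ^ 2) * nsq x := fun k =>
        Finset.sum_mul_sq_le_sq_mul_sq Finset.univ (fun j => Φ k j) x
      calc nsq (Φ.mulVec x) = ∑ k, (Φ.mulVec x k) ^ 2 := rfl
        _ ≤ ∑ k, (∑ j, Φ k j ^ 2) * nsq x := Finset.sum_le_sum fun k _ => hk k
        _ = (∑ k, ∑ j, Φ k j ^ 2) * nsq x := by rw [Finset.sum_mul]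
    nlinarith [nsq_nonneg x]

lemma ripConst_nonneg {n d : ℕ} (Φ : Matrix (Fin n) (Fin d) ℝ) (t : ℕ) : 0 ≤ ripConst Φ t :=
  le_csInf (ripSet_nonempty Φ t) fun _ hδ => hδ.1

lemma satRIP_ripConst {n d : ℕ} (Φ : Matrix (Fin n) (Fin d) ℝ) (t : ℕ) :
    satRIP Φ t (ripConst Φ t) := by
  intro x hx
  rcases eq_or_ne (nsq x) 0 with h0 | h0
  · have hx0 : x = 0 := nsq_eq_zero h0
    subst hx0
    constructor <;> simp [nsq, Matrix.mulVec_zero]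
  · have hpos : 0 < nsq x := lt_of_le_of_ne (nsq_nonneg x) (Ne.symm h0)
    have key : ∀ ε : ℝ, 0 < ε → ∃ δ' : ℝ, (0 ≤ δ' ∧ satRIP Φ t δ') ∧
        δ' < ripConst Φ t + ε / nsq x := by
      intro ε hε
      obtain ⟨δ', h1, h2⟩ := exists_lt_of_csInf_lt (ripSet_nonempty Φ t)
        (lt_add_of_pos_right (sInf {δ : ℝ | 0 ≤ δ ∧ satRIP Φ t δ}) (div_pos hε hpos))
      exact ⟨δ', h1, h2⟩
    constructor
    · refine le_of_forall_pos_le_add fun ε hε => ?_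
      obtain ⟨δ', hS, hlt⟩ := key ε hε
      have h1 := (hS.2 x hx).1
      have h2 : (δ' - ripConst Φ t) * nsq x ≤ ε := by
        have h3 : (δ' - ripConst Φ t) * nsq x ≤ (ε / nsq x) * nsq x :=
          mul_le_mul_of_nonneg_right (by linarith) hpos.le
        rwa [div_mul_cancel₀ ε hpos.ne'] at h3
      nlinarith
    · refine le_of_forall_pos_le_add fun ε hε => ?_
      obtain ⟨δ', hS, hlt⟩ := key ε hε
      have h1 := (hS.2 x hx).2
      have h2 : (δ' - ripConst Φ t) * nsq x ≤ ε := by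
        have h3 : (δ' - ripConst Φ t) * nsq x ≤ (ε / nsq x) * nsq x :=
          mul_le_mul_of_nonneg_right (by linarith) hpos.le
        rwa [div_mul_cancel₀ ε hpos.ne'] at h3
      nlinarith

lemma sparsity_le_of_subset {d : ℕ} (x : Fin d → ℝ) (s : Finset (Fin d))
    (h : ∀ j, x j ≠ 0 → j ∈ s) : sparsity x ≤ s.card := by
  apply Finset.card_le_card
  intro j hj
  rw [Finset.mem_filter] at hj
  exact h j hj.2

lemma sum_ext {d : ℕ} (r : Finset (Fin d)) (g : Fin d → ℝ → ℝ) (hg : ∀ j, g j 0 = 0)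
    (c : {j // j ∈ r} → ℝ) :
    ∑ j : Fin d, g j (if h : j ∈ r then c ⟨j, h⟩ else 0) = ∑ j : {j // j ∈ r}, g (j : Fin d) (c j) := by
  rw [Finset.univ_eq_attach]
  rw [← Finset.sum_subset (Finset.subset_univ r)
    (fun j _ hj => by rw [dif_neg hj]; exact hg j)]
  rw [← Finset.sum_attach r (fun j => g j (if h : j ∈ r then c ⟨j, h⟩ else 0))]
  exact Finset.sum_congr rfl fun j _ => by rw [dif_pos j.2]

lemma mulVec_ext {n d : ℕ} (Φ : Matrix (Fin n) (Fin d) ℝ) (r : Finset (Fin d))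
    (c : {j // j ∈ r} → ℝ) :
    Φ.mulVec (fun j => if h : j ∈ r then c ⟨j, h⟩ else 0) = (cols Φ r).mulVec c := by
  funext k
  have := sum_ext r (fun j t => Φ k j * t) (fun _ => mul_zero _) c
  simpa [Matrix.mulVec, dotProduct, cols] using this

lemma nsq_ext {d : ℕ} (r : Finset (Fin d)) (c : {j // j ∈ r} → ℝ) :
    nsq (fun j : Fin d => if h : j ∈ r then c ⟨j, h⟩ else 0) = nsq c := by
  have := sum_ext r (fun _ t => t ^ 2) (fun _ => by norm_num) c
  simpa [nsq] using this

lemma sum_mix {d : ℕ} (r : Finset (Fin d)) (i : Fin d) (hir : i ∉ r) (a : ℝ)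
    (g : Fin d → ℝ → ℝ) (hg : ∀ j, g j 0 = 0) (c : {j // j ∈ r} → ℝ) :
    ∑ j : Fin d, g j (if j = i then a else if h : j ∈ r then c ⟨j, h⟩ else 0)
      = g i a + ∑ j : {j // j ∈ r}, g (j : Fin d) (c j) := by
  rw [← Finset.add_sum_erase Finset.univ _ (Finset.mem_univ i)]
  congr 1
  · rw [if_pos rfl]
  · calc ∑ j ∈ Finset.univ.erase i, g j (if j = i then a else if h : j ∈ r then c ⟨j, h⟩ else 0)
        = ∑ j ∈ Finset.univ.erase i, g j (if h : j ∈ r then c ⟨j, h⟩ else 0) :=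
          Finset.sum_congr rfl fun j hj => by rw [if_neg (Finset.ne_of_mem_erase hj)]
      _ = ∑ j : Fin d, g j (if h : j ∈ r then c ⟨j, h⟩ else 0) :=
          Finset.sum_erase _ (by rw [dif_neg hir]; exact hg i)
      _ = _ := sum_ext r g hg c

lemma mulVec_mix {n d : ℕ} (Φ : Matrix (Fin n) (Fin d) ℝ) (r : Finset (Fin d)) (i : Fin d)
    (hir : i ∉ r) (a : ℝ) (c : {j // j ∈ r} → ℝ) :
    Φ.mulVec (fun j => if j = i then a else if h : j ∈ r then c ⟨j, h⟩ else 0)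
      = fun k => Φ k i * a + (cols Φ r).mulVec c k := by
  funext k
  have := sum_mix r i hir a (fun j t => Φ k j * t) (fun _ => mul_zero _) c
  simpa [Matrix.mulVec, dotProduct, cols] using this

lemma nsq_mix {d : ℕ} (r : Finset (Fin d)) (i : Fin d) (hir : i ∉ r) (a : ℝ)
    (c : {j // j ∈ r} → ℝ) :
    nsq (fun j : Fin d => if j = i then a else if h : j ∈ r then c ⟨j, h⟩ else 0)
      = a ^ 2 + nsq c := by
  have := sum_mix r i hir a (fun _ t => t ^ 2) (fun _ => by norm_num) c
  simpa [nsq] using this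

end Stmt14Aux

/-- true features with nonzero coefficient keep a nonzero
least-squares coefficient on any superset `p` of the support. -/
theorem stmt14 {n d : ℕ} (Φ : Matrix (Fin n) (Fin d) ℝ)
    (hunit : ∀ j, nsq (_root_.col Φ j) = 1)
    (xs : Fin d → ℝ) (m ℓ : ℕ) (p : Finset (Fin d))
    (hsub : spt xs ⊆ p) (hp : p.card ≤ m + ℓ)
    (hδ : ripConst Φ (m + ℓ) < 1 / 2)
    (xh : Fin d → ℝ) (hx : leastSq Φ (Φ.mulVec xs) p xh)
    (i : Fin d) (hi : i ∈ p) (his : i ∈ spt xs) (hne : xs i ≠ 0) :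
    xh i ≠ 0 ∧
    (1 - ripConst Φ (m + ℓ) ^ 2 / (1 - ripConst Φ (m + ℓ))) * |xs i| ≤
      |(_root_.col Φ i ⬝ᵥ ((1 - proj Φ (p.erase i)).mulVec (_root_.col Φ i))) * xs i| ∧
    0 < (1 - ripConst Φ (m + ℓ) ^ 2 / (1 - ripConst Φ (m + ℓ))) * |xs i| := by
  classical
  set δ := ripConst Φ (m + ℓ) with hδdef
  have hδ0 : 0 ≤ δ := ripConst_nonneg Φ (m + ℓ)
  have hrip := satRIP_ripConst Φ (m + ℓ)
  have h1δ : 0 < 1 - δ := by rw [hδdef]; linarith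
  have hxsi : 0 < |xs i| := abs_pos.2 hne
  have hxs_supp : ∀ j, j ∉ p → xs j = 0 := by
    intro j hj
    by_contra h
    exact hj (hsub (by simp [spt, h]))
  -- Part 1 : xh = xs
  have hxh_eq : xh = xs := by
    have h1 := hx.2 xs hxs_supp
    have h2 : nsq (Φ.mulVec xs - Φ.mulVec xh) = 0 := by
      have h3 : nsq (Φ.mulVec xs - Φ.mulVec xs) = 0 := by simp [nsq]
      have h4 := nsq_nonneg (Φ.mulVec xs - Φ.mulVec xh)
      linarith
    have h4 : Φ.mulVec (xs - xh) = 0 := by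
      rw [Matrix.mulVec_sub]
      exact nsq_eq_zero h2
    have hs : sparsity (xs - xh) ≤ m + ℓ := by
      refine le_trans (sparsity_le_of_subset _ p ?_) hp
      intro j hj
      by_contra hjp
      exact hj (by simp [Pi.sub_apply, hxs_supp j hjp, hx.1 j hjp])
    have h5 := (hrip (xs - xh) hs).1
    rw [h4] at h5
    have h6 : nsq (xs - xh) = 0 := by
      have h7 := nsq_nonneg (xs - xh)
      have h8 : nsq (0 : Fin n → ℝ) = 0 := by simp [nsq]
      nlinarith
    have h9 : xs - xh = 0 := nsq_eq_zero h6
    funext j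
    have := congrFun h9 j
    simp only [Pi.sub_apply, Pi.zero_apply, sub_eq_zero] at this
    exact this.symm
  -- setup for parts 2 and 3
  set r := p.erase i with hr
  have hir : i ∉ r := Finset.notMem_erase i p
  have hrp : r ⊆ p := Finset.erase_subset i p
  have hφφ : _root_.col Φ i ⬝ᵥ _root_.col Φ i = 1 := by rw [dot_self_nsq]; exact hunit i
  have hR1 : ∀ c : {j // j ∈ r} → ℝ, (1 - δ) * nsq c ≤ nsq ((cols Φ r).mulVec c) := by
    intro c
    have hs : sparsity (fun j => if h : j ∈ r then c ⟨j, h⟩ else 0) ≤ m + ℓ := by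
      refine le_trans (sparsity_le_of_subset _ r ?_) (le_trans (Finset.card_le_card hrp) hp)
      intro j hj
      by_contra hjr
      exact hj (dif_neg hjr)
    have h := (hrip _ hs).1
    rwa [nsq_ext, mulVec_ext] at h
  have hexpand : ∀ (a : ℝ) (w : Fin n → ℝ),
      nsq (fun k => Φ k i * a + w k) = a ^ 2 + 2 * a * (_root_.col Φ i ⬝ᵥ w) + nsq w := by
    intro a w
    have h2 : ∑ k, Φ k i ^ 2 = 1 := hunit i
    show ∑ k, (Φ k i * a + w k) ^ 2 = _
    calc ∑ k, (Φ k i * a + w k) ^ 2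
        = ∑ k, (a ^ 2 * Φ k i ^ 2 + 2 * a * (Φ k i * w k) + w k ^ 2) :=
          Finset.sum_congr rfl fun k _ => by ring
      _ = a ^ 2 * ∑ k, Φ k i ^ 2 + 2 * a * ∑ k, Φ k i * w k + ∑ k, w k ^ 2 := by
          rw [Finset.sum_add_distrib, Finset.sum_add_distrib, Finset.mul_sum, Finset.mul_sum]
      _ = a ^ 2 + 2 * a * (_root_.col Φ i ⬝ᵥ w) + nsq w := by rw [h2, mul_one]; rfl
  have hcross : ∀ (a : ℝ) (c : {j // j ∈ r} → ℝ),
      2 * a * (_root_.col Φ i ⬝ᵥ (cols Φ r).mulVec c) ≤ δ * (a ^ 2 + nsq c) := by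
    intro a c
    have hs : ∀ b : ℝ,
        sparsity (fun j => if j = i then b else if h : j ∈ r then c ⟨j, h⟩ else 0) ≤ m + ℓ := by
      intro b
      refine le_trans (sparsity_le_of_subset _ p ?_) hp
      intro j hj
      by_cases hji : j = i
      · subst hji; exact hi
      · rw [if_neg hji] at hj
        by_contra hjp
        have hjr : j ∉ r := fun h => hjp (hrp h)
        exact hj (dif_neg hjr)
    have h1 := (hrip _ (hs a)).2
    have h2 := (hrip _ (hs (-a))).1
    rw [mulVec_mix Φ r i hir a c, nsq_mix r i hir a c, hexpand] at h1
    rw [mulVec_mix Φ r i hir (-a) c, nsq_mix r i hir (-a) c, hexpand] at h2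
    nlinarith [h1, h2]
  have hu2 : ∀ c : {j // j ∈ r} → ℝ,
      (_root_.col Φ i ⬝ᵥ (cols Φ r).mulVec c) ^ 2 ≤ δ ^ 2 * nsq c := by
    intro c
    set u := _root_.col Φ i ⬝ᵥ (cols Φ r).mulVec c with hu
    rcases eq_or_lt_of_le hδ0 with h0 | h0
    · have ha := hcross 1 c
      have hb := hcross (-1) c
      rw [← h0] at ha hb
      have hu0 : u = 0 := by nlinarith
      rw [hu0, ← h0]
      simp [nsq_nonneg c]
    · have ha := hcross (u / δ) c
      have hδne : δ ≠ 0 := h0.ne'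
      have key : 2 * u ^ 2 ≤ u ^ 2 + δ ^ 2 * nsq c := by
        have hmul := mul_le_mul_of_nonneg_left ha h0.le
        have e1 : δ * (2 * (u / δ) * u) = 2 * u ^ 2 := by field_simp
        have e2 : δ * (δ * ((u / δ) ^ 2 + nsq c)) = u ^ 2 + δ ^ 2 * nsq c := by
          field_simp
        rwa [e1, e2] at hmul
      linarith
  -- positive definiteness of the Gram matrix
  have hGpd : ((cols Φ r)ᵀ * cols Φ r).PosDef := by
    rw [Matrix.posDef_iff_dotProduct_mulVec]
    constructor
    · have h := Matrix.isHermitian_conjTranspose_mul_self (cols Φ r)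
      rwa [Matrix.conjTranspose_eq_transpose_of_trivial] at h
    · intro x hx
      have hx0 : 0 < nsq x := by
        rcases eq_or_lt_of_le (nsq_nonneg x) with h | h
        · exact absurd (nsq_eq_zero h.symm) hx
        · exact h
      have hq : x ⬝ᵥ ((cols Φ r)ᵀ * cols Φ r).mulVec x = nsq ((cols Φ r).mulVec x) := by
        rw [← Matrix.mulVec_mulVec, Matrix.dotProduct_mulVec, ← Matrix.mulVec_transpose,
          Matrix.transpose_transpose, dot_self_nsq]
      have := hR1 x
      simp only [star_trivial]
      rw [hq]
      nlinarith
  have hdetu : IsUnit ((cols Φ r)ᵀ * cols Φ r).det :=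
    isUnit_iff_ne_zero.2 hGpd.det_pos.ne'
  have hGinv : ((cols Φ r)ᵀ * cols Φ r) * ((cols Φ r)ᵀ * cols Φ r)⁻¹ = 1 :=
    Matrix.mul_nonsing_inv _ hdetu
  set b := (cols Φ r)ᵀ.mulVec (_root_.col Φ i) with hb
  set cc := ((cols Φ r)ᵀ * cols Φ r)⁻¹.mulVec b with hcc
  set t := _root_.col Φ i ⬝ᵥ (cols Φ r).mulVec cc with ht
  have hval : _root_.col Φ i ⬝ᵥ ((1 - proj Φ r).mulVec (_root_.col Φ i)) = 1 - t := by
    rw [Matrix.sub_mulVec, Matrix.one_mulVec, dotProduct_sub, hφφ]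
    congr 1
    show _root_.col Φ i ⬝ᵥ (cols Φ r * ((cols Φ r)ᵀ * cols Φ r)⁻¹ * (cols Φ r)ᵀ).mulVec (_root_.col Φ i) = t
    rw [← Matrix.mulVec_mulVec, ← Matrix.mulVec_mulVec]
  have hGc : ((cols Φ r)ᵀ * cols Φ r).mulVec cc = b := by
    rw [hcc, Matrix.mulVec_mulVec, hGinv, Matrix.one_mulVec]
  have ht_q : t = nsq ((cols Φ r).mulVec cc) := by
    have e1 : t = b ⬝ᵥ cc := by
      rw [ht, Matrix.dotProduct_mulVec, ← Matrix.mulVec_transpose]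
    have e2 : nsq ((cols Φ r).mulVec cc) = b ⬝ᵥ cc := by
      rw [← dot_self_nsq, Matrix.dotProduct_mulVec, ← Matrix.mulVec_transpose,
        Matrix.mulVec_mulVec, hGc]
    rw [e1, e2]
  have ht0 : 0 ≤ t := ht_q ▸ nsq_nonneg _
  have hts : (1 - δ) * nsq cc ≤ t := ht_q ▸ hR1 cc
  have htu : t ^ 2 ≤ δ ^ 2 * nsq cc := hu2 cc
  have htb : t ≤ δ ^ 2 / (1 - δ) := by
    rcases ht0.eq_or_lt with h | h
    · rw [← h]; positivity
    · rw [le_div_iff₀ h1δ]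
      nlinarith [nsq_nonneg cc, mul_le_mul_of_nonneg_left hts (sq_nonneg δ),
        mul_le_mul_of_nonneg_left htu h1δ.le]
  have hα0 : 0 < 1 - δ ^ 2 / (1 - δ) := by
    have hlt : δ ^ 2 / (1 - δ) < 1 := by
      rw [div_lt_one h1δ]
      rw [hδdef] at *
      nlinarith
    linarith
  have ht1 : t < 1 := lt_of_le_of_lt htb (by linarith)
  refine ⟨by rw [hxh_eq]; exact hne, ?_, mul_pos hα0 hxsi⟩
  rw [hval, abs_mul]
  calc (1 - δ ^ 2 / (1 - δ)) * |xs i|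
      ≤ (1 - t) * |xs i| := mul_le_mul_of_nonneg_right (by linarith) (abs_nonneg _)
    _ = |1 - t| * |xs i| := by rw [abs_of_nonneg (by linarith : (0:ℝ) ≤ 1 - t)]
end
end

section
/- (Characterization of true features in the expanded support.) With y = Φx*, s* = supp(x*) where all entries of x* on s* are nonzero, let p be an index set with s* ⊆ p, |p| ≤ m + ℓ, and δ_{m+ℓ} < 1/2. Let x̂ be the least-squares estimate of y supported on p. Then for every i ∈ p: i ∈ s* if and only if x̂_i ≠ 0. -/
open Matrix Finset

noncomputable section

/-- Lemma 8 of the paper: characterization of true features in the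
expanded support — `i ∈ s*` iff the least-squares coefficient `x̂_i` is nonzero. -/
theorem stmt15 {n d : ℕ} (Φ : Matrix (Fin n) (Fin d) ℝ)
    (hunit : ∀ j, nsq (_root_.col Φ j) = 1)
    (xs : Fin d → ℝ) (m ℓ : ℕ) (p : Finset (Fin d))
    (hsub : spt xs ⊆ p) (hp : p.card ≤ m + ℓ)
    (hδ : ripConst Φ (m + ℓ) < 1 / 2)
    (xh : Fin d → ℝ) (hx : leastSq Φ (Φ.mulVec xs) p xh) :
    ∀ i ∈ p, (i ∈ spt xs ↔ xh i ≠ 0) := by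
  -- First: the RIP set is nonempty, so from hδ get a δ < 1/2 with satRIP.
  have hnsq_nonneg : ∀ {k : Type} [Fintype k] (v : k → ℝ), 0 ≤ nsq v := by
    intro k _ v; exact Finset.sum_nonneg fun i _ => sq_nonneg _
  set C : ℝ := ∑ k, ∑ j, (Φ k j) ^ 2 with hC
  have hC0 : 0 ≤ C := Finset.sum_nonneg fun k _ => Finset.sum_nonneg fun j _ => sq_nonneg _
  have hbound : ∀ x : Fin d → ℝ, nsq (Φ.mulVec x) ≤ C * nsq x := by
    intro x
    have h1 : ∀ k, (Φ.mulVec x k) ^ 2 ≤ (∑ j, (Φ k j) ^ 2) * nsq x := by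
      intro k
      have h2 := Finset.sum_mul_sq_le_sq_mul_sq Finset.univ (fun j => Φ k j) x
      simpa [Matrix.mulVec, dotProduct, nsq] using h2
    calc nsq (Φ.mulVec x) = ∑ k, (Φ.mulVec x k) ^ 2 := rfl
      _ ≤ ∑ k, (∑ j, (Φ k j) ^ 2) * nsq x := Finset.sum_le_sum fun k _ => h1 k
      _ = C * nsq x := by rw [← Finset.sum_mul]
  have hmem : (C + 1) ∈ {δ : ℝ | 0 ≤ δ ∧ satRIP Φ (m + ℓ) δ} := by
    refine ⟨by linarith, fun x hs => ⟨?_, ?_⟩⟩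
    · have := hnsq_nonneg (Φ.mulVec x)
      have := hnsq_nonneg x
      nlinarith
    · have := hbound x
      have := hnsq_nonneg x
      nlinarith
  obtain ⟨δ, hδmem, hδlt⟩ :=
    exists_lt_of_csInf_lt (s := {δ : ℝ | 0 ≤ δ ∧ satRIP Φ (m + ℓ) δ}) ⟨C + 1, hmem⟩ hδ
  obtain ⟨hδ0, hsat⟩ := hδmem
  -- xs is feasible, so residual of xh is ≤ 0, hence Φ xh = Φ xs.
  have hxs_supp : ∀ i, i ∉ p → xs i = 0 := by
    intro i hip
    by_contra h
    exact hip (hsub (by simp [spt, h]))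
  have hle := hx.2 xs hxs_supp
  have hzero : nsq (Φ.mulVec xs - Φ.mulVec xh) = 0 := by
    have h0 : nsq (Φ.mulVec xs - Φ.mulVec xs) = 0 := by simp [nsq]
    have := hnsq_nonneg (Φ.mulVec xs - Φ.mulVec xh)
    linarith [hle, h0.le, h0.ge]
  have hΦeq : Φ.mulVec (xs - xh) = 0 := by
    have hptw : ∀ k, (Φ.mulVec xs - Φ.mulVec xh) k = 0 := by
      intro k
      have : ((Φ.mulVec xs - Φ.mulVec xh) k) ^ 2 = 0 := by
        have hsum : ∑ j, ((Φ.mulVec xs - Φ.mulVec xh) j) ^ 2 = 0 := hzero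
        have := (Finset.sum_eq_zero_iff_of_nonneg
          (fun j _ => sq_nonneg ((Φ.mulVec xs - Φ.mulVec xh) j))).mp hsum k (Finset.mem_univ k)
        exact this
      exact (pow_eq_zero_iff two_ne_zero).mp this
    funext k
    have := hptw k
    simp only [Pi.sub_apply] at this
    simp only [Matrix.mulVec_sub, Pi.sub_apply, Pi.zero_apply]
    linarith
  -- sparsity of xs - xh is ≤ m + ℓ
  have hsp : sparsity (xs - xh) ≤ m + ℓ := by
    refine le_trans (le_trans (Finset.card_le_card ?_) hp) le_rfl
    intro i hi
    simp only [sparsity, Finset.mem_filter, Finset.mem_univ, true_and, Pi.sub_apply] at hi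
    by_contra hip
    exact hi (by rw [hxs_supp i hip, hx.1 i hip, sub_zero])
  -- apply RIP lower bound
  have hrip := (hsat (xs - xh) hsp).1
  rw [hΦeq] at hrip
  have h0' : nsq (0 : Fin n → ℝ) = 0 := by simp [nsq]
  rw [h0'] at hrip
  have h1δ : 0 < 1 - δ := by linarith
  have hnsq0 : nsq (xs - xh) = 0 := by nlinarith [hnsq_nonneg (xs - xh)]
  have hxeq : xs = xh := by
    funext i
    have := (Finset.sum_eq_zero_iff_of_nonneg
      (fun j _ => sq_nonneg ((xs - xh) j))).mp hnsq0 i (Finset.mem_univ i)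
    have := (pow_eq_zero_iff two_ne_zero).mp this
    simp only [Pi.sub_apply] at this
    linarith
  intro i _
  constructor
  · intro hi
    simp only [spt, Finset.mem_filter, Finset.mem_univ, true_and] at hi
    rw [← hxeq]; exact hi
  · intro hi
    simp only [spt, Finset.mem_filter, Finset.mem_univ, true_and]
    rw [hxeq]; exact hi
end
end
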